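/- Let f : ℝ^d → ℝ be L-smooth. For every x ∈ ℝ^d, every v ∈ ℝ^d with v ≠ 0, and every η > 0, the normalized step x⁺ = x − η v/‖v‖ satisfies f(x⁺) ≤ f(x) − η‖∇f(x)‖ + 2η‖v − ∇f(x)‖ + Lη²/2. -/

import Mathlib

open scoped RealInnerProductSpace

lemma descent_lemma {d : ℕ} (L : ℝ) (hL : 0 ≤ L)
    (f : EuclideanSpace ℝ (Fin d) → ℝ) (hdiff : Differentiable ℝ f)
    (hsmooth : ∀ x y, ‖gradient f x - gradient f y‖ ≤ L * ‖x - y‖)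
    (x y : EuclideanSpace ℝ (Fin d)) :
    f y ≤ f x + ⟪gradient f x, y - x⟫ + L / 2 * ‖y - x‖ ^ 2 := by
  set u := y - x with hu
  set φ : ℝ → ℝ := fun t => f (x + t • u) with hφ
  have hgcont : Continuous (gradient f) := by
    exact (LipschitzWith.of_dist_le_mul (K := L.toNNReal) (fun a b => by
      simpa [dist_eq_norm, Real.coe_toNNReal L hL] using hsmooth a b)).continuous
  have hder : ∀ t : ℝ, HasDerivAt φ (⟪gradient f (x + t • u), u⟫) t := by
    intro t
    have line : HasDerivAt (fun t : ℝ => x + t • u) u t := by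
      simpa using ((hasDerivAt_id t).smul_const u).const_add x
    have hf := ((hdiff (x + t • u)).hasGradientAt).hasFDerivAt
    have := hf.comp_hasDerivAt t line
    simpa [InnerProductSpace.toDual_apply_apply, hφ, Function.comp_def] using this
  have hcont : Continuous fun t : ℝ => ⟪gradient f (x + t • u), u⟫ := by
    exact (hgcont.comp (continuous_const.add (continuous_id.smul continuous_const))).inner
      continuous_const
  have key : f y - f x = ∫ t in (0:ℝ)..1, ⟪gradient f (x + t • u), u⟫ := by
    have := intervalIntegral.integral_eq_sub_of_hasDerivAt
      (fun t _ => hder t) (hcont.intervalIntegrable 0 1)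
    simp only [hφ] at this
    rw [this]; simp [hu]
  have bound : ∀ t ∈ Set.Icc (0:ℝ) 1,
      ⟪gradient f (x + t • u), u⟫ ≤ ⟪gradient f x, u⟫ + L * t * ‖u‖ ^ 2 := by
    intro t ht
    have h1 : ⟪gradient f (x + t • u) - gradient f x, u⟫ ≤ L * t * ‖u‖ ^ 2 := by
      calc ⟪gradient f (x + t • u) - gradient f x, u⟫
          ≤ ‖gradient f (x + t • u) - gradient f x‖ * ‖u‖ := real_inner_le_norm _ _
        _ ≤ (L * ‖(x + t • u) - x‖) * ‖u‖ := by
            gcongr; exact hsmooth _ _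
        _ = L * t * ‖u‖ ^ 2 := by
            rw [add_sub_cancel_left, norm_smul, Real.norm_eq_abs, abs_of_nonneg ht.1]
            ring
    have := inner_sub_left (𝕜 := ℝ) (gradient f (x + t • u)) (gradient f x) u
    linarith [this ▸ h1]
  have hint : ∫ t in (0:ℝ)..1, ⟪gradient f (x + t • u), u⟫
      ≤ ∫ t in (0:ℝ)..1, (⟪gradient f x, u⟫ + L * t * ‖u‖ ^ 2) := by
    apply intervalIntegral.integral_mono_on (by norm_num)
      (hcont.intervalIntegrable 0 1)
      (((continuous_const.add ((continuous_const.mul continuous_id).mul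
        continuous_const))).intervalIntegrable 0 1)
    exact bound
  have hval : ∫ t in (0:ℝ)..1, (⟪gradient f x, u⟫ + L * t * ‖u‖ ^ 2)
      = ⟪gradient f x, u⟫ + L / 2 * ‖u‖ ^ 2 := by
    have hre : (fun t : ℝ => ⟪gradient f x, u⟫ + L * t * ‖u‖ ^ 2)
        = fun t : ℝ => ⟪gradient f x, u⟫ + (L * ‖u‖ ^ 2) * t := by
      funext t; ring
    have hI : IntervalIntegrable (fun t : ℝ => L * ‖u‖ ^ 2 * t) MeasureTheory.volume 0 1 :=
      Continuous.intervalIntegrable (by continuity) 0 1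
    rw [hre, intervalIntegral.integral_add intervalIntegrable_const hI,
      intervalIntegral.integral_const_mul, integral_id]
    simp; ring
  linarith [key ▸ (hint.trans_eq hval)]

/-- Descent inequality for a normalized step: if `f` is `L`-smooth
(differentiable with `L`-Lipschitz gradient), then the normalized step
`x⁺ = x − η v/‖v‖` satisfies
`f(x⁺) ≤ f(x) − η‖∇f(x)‖ + 2η‖v − ∇f(x)‖ + Lη²/2`. -/
theorem normalized_step_descent {d : ℕ} (L η : ℝ) (hL : 0 < L) (hη : 0 < η)
    (f : EuclideanSpace ℝ (Fin d) → ℝ) (hdiff : Differentiable ℝ f)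
    (hsmooth : ∀ x y, ‖gradient f x - gradient f y‖ ≤ L * ‖x - y‖)
    (x v : EuclideanSpace ℝ (Fin d)) (hv : v ≠ 0) :
    f (x - (η / ‖v‖) • v) ≤
      f x - η * ‖gradient f x‖ + 2 * η * ‖v - gradient f x‖ + L * η ^ 2 / 2 := by
  have hvn : (0:ℝ) < ‖v‖ := norm_pos_iff.mpr hv
  set g := gradient f x with hg
  set y := x - (η / ‖v‖) • v with hy
  have hyx : y - x = -((η / ‖v‖) • v) := by rw [hy]; abel
  have hnorm : ‖y - x‖ = η := by
    rw [hyx, norm_neg, norm_smul, Real.norm_eq_abs, abs_of_pos (div_pos hη hvn)]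
    field_simp
  have hmain := descent_lemma L hL.le f hdiff hsmooth x y
  rw [hnorm] at hmain
  -- inner product bound
  have hinner : ⟪g, y - x⟫ ≤ -η * ‖g‖ + 2 * η * ‖v - g‖ := by
    rw [hyx, inner_neg_right, inner_smul_right]
    have h1 : ⟪g, v⟫ = ⟪v, v⟫ - ⟪v - g, v⟫ := by
      rw [inner_sub_left]; ring
    have h2 : ⟪v - g, v⟫ ≤ ‖v - g‖ * ‖v‖ := real_inner_le_norm _ _
    have h3 : ‖g‖ - ‖v - g‖ ≤ ‖v‖ := by
      have h := norm_sub_norm_le g v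
      rw [norm_sub_rev] at h
      linarith
    have h4 : ⟪v, v⟫ = ‖v‖ ^ 2 := real_inner_self_eq_norm_sq v
    -- ⟪g,v⟫ ≥ ‖v‖² - ‖v-g‖‖v‖ ≥ (‖g‖ - 2‖v-g‖)‖v‖
    have h5 : (‖g‖ - 2 * ‖v - g‖) * ‖v‖ ≤ ⟪g, v⟫ := by
      rw [h1, h4]
      nlinarith [norm_nonneg (v - g)]
    have h6 : η / ‖v‖ * ⟪g, v⟫ ≥ η / ‖v‖ * ((‖g‖ - 2 * ‖v - g‖) * ‖v‖) := by
      apply mul_le_mul_of_nonneg_left h5 (le_of_lt (div_pos hη hvn))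
    have h7 : η / ‖v‖ * ((‖g‖ - 2 * ‖v - g‖) * ‖v‖) = η * (‖g‖ - 2 * ‖v - g‖) := by
      field_simp
    nlinarith
  calc f y ≤ f x + ⟪g, y - x⟫ + L / 2 * η ^ 2 := hmain
    _ ≤ f x + (-η * ‖g‖ + 2 * η * ‖v - g‖) + L / 2 * η ^ 2 := by linarith
    _ = f x - η * ‖g‖ + 2 * η * ‖v - g‖ + L * η ^ 2 / 2 := by ring
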